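/- Let $v \in C^{2}$ on the sector $\mathbb{D} = \{0 < k_1 z_2 < z_1\}$ satisfy the pointwise bounds $|v(\mathbf{z})| \le M(|\mathbf{z}|+1)^{-1-\beta}$ and $|\nabla v(\mathbf{z})| \le M(|\mathbf{z}|+1)^{-1-\beta}(z_2+1)^{-1}$ for some $M, \beta > 0$, and suppose $a_{11}, a_{12}$ are measurable with $|a_{11}| \le \Lambda$ and $|a_{12}(\mathbf{z})| \le \Lambda(|\mathbf{z}|+1)^{-1-\beta}$. Assume additionally $|v_{z_1}(\mathbf{z})| \le M|\mathbf{z}|^{-2-\beta}$ for $|\mathbf{z}| \ge 1$. Then for any point $\mathbf{z}^0 = (z_1^0, z_2^0) \in \mathbb{D}$ with $|\mathbf{z}^0| \ge 1$, the integral along the vertical segment from $\mathbf{z}^0$ up to the boundary point $\mathbf{z}^I = (z_1^0, z_1^0/k_1)$ satisfies $\Big|\int_{z_2^0}^{z_2^I}\big(a_{11}v_{z_1} + a_{12}v_{z_2}\big)(z_1^0, s)\,ds\Big| \le C M\Lambda\, |\mathbf{z}^0|^{-1-\beta}$ for a constant $C$ depending only on $k_1$ and $\beta$. -/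

import Mathlib

/-- the key integral estimate along vertical segments giving the
decay rate `|z⁰|^{-1-β}` for the pressure perturbation. -/
theorem vertical_integral_decay_estimate
    (k₁ β : ℝ) (hk : 0 < k₁) (hβ : 0 < β) :
    ∃ C > 0, ∀ (v a11 a12 : ℝ × ℝ → ℝ) (M Λ : ℝ), 0 < M → 0 < Λ →
      ContDiffOn ℝ 2 v {z : ℝ × ℝ | 0 < k₁ * z.2 ∧ k₁ * z.2 < z.1} →
      Measurable a11 → Measurable a12 →
      (∀ z : ℝ × ℝ, 0 < k₁ * z.2 → k₁ * z.2 < z.1 →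
        |v z| ≤ M * (‖z‖ + 1) ^ (-1-β)) →
      (∀ z : ℝ × ℝ, 0 < k₁ * z.2 → k₁ * z.2 < z.1 →
        ‖fderiv ℝ v z‖ ≤ M * (‖z‖ + 1) ^ (-1-β) * (z.2 + 1)⁻¹) →
      (∀ z : ℝ × ℝ, 0 < k₁ * z.2 → k₁ * z.2 < z.1 → 1 ≤ ‖z‖ →
        |fderiv ℝ v z (1, 0)| ≤ M * ‖z‖ ^ (-2-β)) →
      (∀ z : ℝ × ℝ, |a11 z| ≤ Λ) →
      (∀ z : ℝ × ℝ, |a12 z| ≤ Λ * (‖z‖ + 1) ^ (-1-β)) →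
      ∀ z₀ : ℝ × ℝ, 0 < k₁ * z₀.2 → k₁ * z₀.2 < z₀.1 → 1 ≤ ‖z₀‖ →
        |∫ s in z₀.2..(z₀.1 / k₁),
            (a11 (z₀.1, s) * fderiv ℝ v (z₀.1, s) (1, 0)
              + a12 (z₀.1, s) * fderiv ℝ v (z₀.1, s) (0, 1))| ≤
          C * M * Λ * ‖z₀‖ ^ (-1-β) := by
  refine ⟨(2:ℝ) ^ (3+β) / (1+β), by positivity, ?_⟩
  intro v a11 a12 M Λ hM hΛ hv _ _ hvb hgrad hv1 ha11 ha12 z₀ h1 h2 hz₀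
  set r := ‖z₀‖ with hr
  have hr0 : (0:ℝ) < r := lt_of_lt_of_le one_pos hz₀
  have hz2 : 0 < z₀.2 := by nlinarith
  have hz1 : 0 < z₀.1 := lt_trans h1 h2
  set T := z₀.1 / k₁ with hT
  have hab : z₀.2 ≤ T := (le_div_iff₀ hk).2 (by linarith [mul_comm k₁ z₀.2])
  -- bound on the norm of intermediate points
  have hNr : ∀ s ∈ Set.Ioc z₀.2 T, r ≤ ‖((z₀.1, s) : ℝ × ℝ)‖ := by
    intro s hs
    have : |z₀.2| ≤ |s| := by
      rw [abs_of_pos hz2, abs_of_pos (lt_trans hz2 hs.1)]; exact hs.1.le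
    simp only [hr, Prod.norm_def, Real.norm_eq_abs]
    exact max_le_max le_rfl this
  set g : ℝ → ℝ := fun s => 2 ^ (3+β) * (M * Λ) * (r + s) ^ (-2-β) with hg
  have hgint : IntervalIntegrable g MeasureTheory.volume z₀.2 T := by
    apply ContinuousOn.intervalIntegrable
    apply ContinuousOn.mul continuousOn_const
    apply ContinuousOn.rpow_const (continuousOn_const.add continuousOn_id)
    intro s hs
    left
    have : 0 < s := lt_of_lt_of_le hz2 (by
      rcases Set.mem_uIcc.mp hs with h | h
      · exact h.1
      · linarith [h.1, hab])
    show r + s ≠ 0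
    positivity
  have key : ∀ s ∈ Set.Ioc z₀.2 T, s ≠ T →
      |a11 (z₀.1, s) * fderiv ℝ v (z₀.1, s) (1, 0)
        + a12 (z₀.1, s) * fderiv ℝ v (z₀.1, s) (0, 1)| ≤ g s := by
    intro s hs hsT
    have hs0 : 0 < s := lt_trans hz2 hs.1
    have hks : 0 < k₁ * s := by positivity
    have hks2 : k₁ * s < z₀.1 := by
      have := lt_of_le_of_ne hs.2 hsT
      calc k₁ * s < k₁ * T := by exact mul_lt_mul_of_pos_left this hk
        _ = z₀.1 := by rw [hT]; field_simp [hk.ne']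
    set p : ℝ × ℝ := (z₀.1, s) with hp
    set N := ‖p‖ with hN
    have hrN : r ≤ N := hNr s hs
    have hN1 : 1 ≤ N := le_trans hz₀ hrN
    have hN0 : 0 < N := lt_of_lt_of_le one_pos hN1
    have hsN : s ≤ N := by
      rw [hN, hp, Prod.norm_def]
      exact le_trans (le_abs_self s) (le_max_right _ _)
    -- first term
    have t1 : |a11 p * fderiv ℝ v p (1, 0)| ≤ Λ * (M * N ^ (-2-β)) := by
      rw [abs_mul]
      exact mul_le_mul (ha11 p) (hv1 p hks hks2 hN1) (abs_nonneg _) hΛ.le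
    -- second term
    have t2 : |a12 p * fderiv ℝ v p (0, 1)| ≤ Λ * (M * N ^ (-2-β)) := by
      rw [abs_mul]
      have h01 : ‖((0:ℝ), (1:ℝ))‖ = 1 := by simp [Prod.norm_def]
      have hD2 : |fderiv ℝ v p (0, 1)| ≤ M * (N + 1) ^ (-1-β) * (s + 1)⁻¹ := by
        calc |fderiv ℝ v p (0, 1)| ≤ ‖fderiv ℝ v p‖ * ‖((0:ℝ), (1:ℝ))‖ :=
              (fderiv ℝ v p).le_opNorm _
          _ = ‖fderiv ℝ v p‖ := by rw [h01, mul_one]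
          _ ≤ M * (N + 1) ^ (-1-β) * (s + 1)⁻¹ := hgrad p hks hks2
      have hstep : Λ * (N + 1) ^ (-1-β) * (M * (N + 1) ^ (-1-β) * (s + 1)⁻¹)
          ≤ Λ * (M * N ^ (-2-β)) := by
        have e1 : (N + 1) ^ (-1-β) * (N + 1) ^ (-1-β) = (N + 1) ^ (-2-2*β) := by
          rw [← Real.rpow_add (by positivity)]; ring_nf
        have e2 : (N + 1) ^ (-2-2*β) ≤ N ^ (-2-2*β) :=
          Real.rpow_le_rpow_of_nonpos hN0 (by linarith) (by linarith)
        have e3 : N ^ (-2-2*β) ≤ N ^ (-2-β) :=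
          Real.rpow_le_rpow_of_exponent_le hN1 (by linarith)
        have e4 : (s + 1)⁻¹ ≤ 1 := by
          rw [inv_le_one_iff₀]; right; linarith
        calc Λ * (N + 1) ^ (-1-β) * (M * (N + 1) ^ (-1-β) * (s + 1)⁻¹)
            ≤ Λ * (N + 1) ^ (-1-β) * (M * (N + 1) ^ (-1-β) * 1) := by
              apply mul_le_mul_of_nonneg_left _ (by positivity)
              exact mul_le_mul_of_nonneg_left e4 (by positivity)
          _ = Λ * (M * ((N + 1) ^ (-1-β) * (N + 1) ^ (-1-β))) := by ring
          _ = Λ * (M * (N + 1) ^ (-2-2*β)) := by rw [e1]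
          _ ≤ Λ * (M * N ^ (-2-β)) := by
              apply mul_le_mul_of_nonneg_left _ hΛ.le
              exact mul_le_mul_of_nonneg_left (le_trans e2 e3) hM.le
      calc |a12 p| * |fderiv ℝ v p (0, 1)|
          ≤ Λ * (N + 1) ^ (-1-β) * (M * (N + 1) ^ (-1-β) * (s + 1)⁻¹) := by
            apply mul_le_mul (ha12 p) hD2 (abs_nonneg _) (by positivity)
        _ ≤ Λ * (M * N ^ (-2-β)) := hstep
    -- combine
    have hNrs : (r + s) / 2 ≤ N := by
      have := hrN; have := hsN; linarith
    have hrsp : 0 < (r + s) / 2 := by positivity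
    have hcmp : N ^ (-2-β) ≤ 2 ^ (2+β) * (r + s) ^ (-2-β) := by
      have := Real.rpow_le_rpow_of_nonpos hrsp hNrs (by linarith : (-2-β:ℝ) ≤ 0)
      calc N ^ (-2-β) ≤ ((r + s) / 2) ^ (-2-β) := this
        _ = (r + s) ^ (-2-β) / 2 ^ (-2-β) := Real.div_rpow (by positivity) (by norm_num : (0:ℝ) ≤ 2) _
        _ = 2 ^ (2+β) * (r + s) ^ (-2-β) := by
            rw [show (-2-β:ℝ) = -(2+β) by ring, Real.rpow_neg (by norm_num : (0:ℝ) ≤ 2)]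
            field_simp
    calc |a11 p * fderiv ℝ v p (1, 0) + a12 p * fderiv ℝ v p (0, 1)|
        ≤ |a11 p * fderiv ℝ v p (1, 0)| + |a12 p * fderiv ℝ v p (0, 1)| := abs_add_le _ _
      _ ≤ Λ * (M * N ^ (-2-β)) + Λ * (M * N ^ (-2-β)) := add_le_add t1 t2
      _ = 2 * (M * Λ) * N ^ (-2-β) := by ring
      _ ≤ 2 * (M * Λ) * (2 ^ (2+β) * (r + s) ^ (-2-β)) := by
          apply mul_le_mul_of_nonneg_left hcmp (by positivity)
      _ = g s := by
          rw [hg]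
          have : (2:ℝ) ^ (3+β) = 2 * 2 ^ (2+β) := by
            rw [show (3+β:ℝ) = 1 + (2+β) by ring, Real.rpow_add (by norm_num), Real.rpow_one]
          rw [this]; ring
  -- apply the norm bound
  have hae : ∀ᵐ s ∂(MeasureTheory.volume.restrict (Set.uIoc z₀.2 T)),
      ‖a11 (z₀.1, s) * fderiv ℝ v (z₀.1, s) (1, 0)
        + a12 (z₀.1, s) * fderiv ℝ v (z₀.1, s) (0, 1)‖ ≤ g s := by
    have hne : ∀ᵐ s ∂(MeasureTheory.volume : MeasureTheory.Measure ℝ), s ≠ T := by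
      rw [MeasureTheory.ae_iff]
      have : {a : ℝ | ¬ a ≠ T} = {T} := by ext a; simp
      rw [this]; exact MeasureTheory.measure_singleton T
    filter_upwards [MeasureTheory.ae_restrict_mem measurableSet_uIoc,
      MeasureTheory.ae_restrict_of_ae hne] with s hs hsT
    rw [Set.uIoc_of_le hab] at hs
    simpa using key s hs hsT
  have hmain := intervalIntegral.norm_integral_le_abs_of_norm_le hae hgint
  rw [Real.norm_eq_abs] at hmain
  refine le_trans hmain ?_
  -- compute the integral of g
  have hcomp : (∫ s in z₀.2..T, (r + s) ^ (-2-β)) =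
      ((r + T) ^ (-1-β) - (r + z₀.2) ^ (-1-β)) / (-1-β) := by
    rw [show (fun s => (r + s) ^ (-2-β)) = (fun s => ((fun x => x ^ (-2-β)) (r + s))) from rfl,
      intervalIntegral.integral_comp_add_left (fun x => x ^ (-2-β)) r,
      integral_rpow]
    · norm_num; ring_nf
    · right
      constructor
      · intro h; linarith
      · intro h
        rcases Set.mem_uIcc.mp h with h | h
        · linarith [h.1]
        · linarith [h.1, hab]
  have hgval : (∫ s in z₀.2..T, g s) = 2 ^ (3+β) * (M * Λ) *
      (((r + T) ^ (-1-β) - (r + z₀.2) ^ (-1-β)) / (-1-β)) := by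
    rw [hg]
    rw [intervalIntegral.integral_const_mul, hcomp]
  rw [hgval]
  have hb1 : (0:ℝ) < r + z₀.2 := by linarith
  have hb2 : (0:ℝ) < r + T := by linarith
  have hmono : (r + T) ^ (-1-β) ≤ (r + z₀.2) ^ (-1-β) :=
    Real.rpow_le_rpow_of_nonpos hb1 (by linarith) (by linarith)
  have hfinal : ((r + T) ^ (-1-β) - (r + z₀.2) ^ (-1-β)) / (-1-β) ≤ r ^ (-1-β) / (1+β) := by
    have heq : ((r + T) ^ (-1-β) - (r + z₀.2) ^ (-1-β)) / (-1-β)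
        = ((r + z₀.2) ^ (-1-β) - (r + T) ^ (-1-β)) / (1+β) := by
      rw [show (-1-β:ℝ) = -(1+β) by ring, div_neg, ← neg_div, neg_sub]
    rw [heq]
    have h5 : (r + z₀.2) ^ (-1-β) - (r + T) ^ (-1-β) ≤ r ^ (-1-β) := by
      have hA : (r + z₀.2) ^ (-1-β) ≤ r ^ (-1-β) :=
        Real.rpow_le_rpow_of_nonpos hr0 (by linarith) (by linarith)
      have hB : 0 ≤ (r + T) ^ (-1-β) := Real.rpow_nonneg hb2.le _
      linarith
    exact div_le_div_of_nonneg_right h5 (by linarith) |>.trans_eq rfl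
  have hnn : 0 ≤ ((r + T) ^ (-1-β) - (r + z₀.2) ^ (-1-β)) / (-1-β) :=
    div_nonneg_of_nonpos (by linarith) (by linarith)
  rw [abs_of_nonneg (by positivity)]
  calc 2 ^ (3+β) * (M * Λ) * (((r + T) ^ (-1-β) - (r + z₀.2) ^ (-1-β)) / (-1-β))
      ≤ 2 ^ (3+β) * (M * Λ) * (r ^ (-1-β) / (1+β)) :=
        mul_le_mul_of_nonneg_left hfinal (by positivity)
    _ = 2 ^ (3+β) / (1+β) * M * Λ * r ^ (-1-β) := by ring
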